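/- Let p/q be the irreducible fraction with 0 < |q| < p given by the continued fraction expansion p/q = a_1 + 1/(a_2 + 1/(... + 1/a_m)) where all a_i are nonzero even integers and m is even. Then p is odd and q is even; in particular p > 1. -/

import Mathlib

/-- Finite continued fraction a₁ + 1/(a₂ + 1/(⋯ + 1/aₘ)) of a list of integers. -/
def cf : List ℤ → ℚ
  | [] => 0
  | [a] => (a : ℚ)
  | a :: b :: l => (a : ℚ) + (cf (b :: l))⁻¹

lemma cf_aux : ∀ as : List ℤ, as ≠ [] → (∀ a ∈ as, a ≠ 0 ∧ Even a) →
    ∃ n d : ℤ, 0 < |d| ∧ |d| < |n| ∧ cf as = (n : ℚ)/(d : ℚ) ∧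
      (Even as.length → Odd n ∧ Even d) ∧ (¬ Even as.length → Even n ∧ Odd d) := by
  intro as
  induction as using cf.induct with
  | case1 => intro h; exact absurd rfl h
  | case2 a =>
    intro _ ha
    obtain ⟨hne, k, hk⟩ := ha a (by simp)
    refine ⟨a, 1, by norm_num, ?_, by simp [cf], by simp, fun _ => ⟨⟨k, hk⟩, odd_one⟩⟩
    rcases le_or_gt 0 a with h | h
    · rw [abs_of_nonneg h, abs_one]; omega
    · rw [abs_of_neg h, abs_one]; omega
  | case3 a b l ih =>
    intro _ ha
    obtain ⟨n, d, hd, hdn, hcf, hev, hod⟩ := ih (by simp)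
      (fun x hx => ha x (by simp [hx]))
    have hn0 : n ≠ 0 := by rintro rfl; simp at hdn; omega
    have hn : (n : ℚ) ≠ 0 := by exact_mod_cast hn0
    have hd0 : (d : ℚ) ≠ 0 := by
      have : d ≠ 0 := by rintro rfl; simp at hd
      exact_mod_cast this
    obtain ⟨hane, k, hk⟩ := ha a (by simp)
    have hae : Even a := ⟨k, hk⟩
    have h2a : 2 ≤ |a| := by
      rcases le_or_gt 0 a with h | h
      · rw [abs_of_nonneg h]; omega
      · rw [abs_of_neg h]; omega
    have hean : Even (a * n) := hae.mul_right n
    have hlen : Even (a :: b :: l).length ↔ ¬ Even (b :: l).length := by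
      simp [Nat.even_add_one]
    refine ⟨a * n + d, n, by omega, ?_, ?_, ?_, ?_⟩
    · have h1 : |a * n| ≤ |a * n + d| + |d| := by
        calc |a * n| = |(a * n + d) + (-d)| := by ring_nf
        _ ≤ |a * n + d| + |(-d)| := abs_add_le _ _
        _ = |a * n + d| + |d| := by rw [abs_neg]
      have h2 : |a * n| = |a| * |n| := abs_mul a n
      nlinarith [abs_nonneg n]
    · rw [cf, hcf]
      field_simp
      norm_cast
    · intro he
      obtain ⟨hne2, hod2⟩ := hod (hlen.mp he)
      exact ⟨hean.add_odd hod2, hne2⟩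
    · intro ho
      obtain ⟨hod2, hev2⟩ := hev (by by_contra h; exact ho (hlen.mpr h))
      exact ⟨hean.add hev2, hod2⟩

theorem stmt_11 (as : List ℤ) (hne : as ≠ []) (hlen : Even as.length)
    (ha : ∀ a ∈ as, a ≠ 0 ∧ Even a)
    (p q : ℤ) (hcop : Int.gcd p q = 1) (hq : 0 < |q|) (hqp : |q| < p)
    (hfrac : (p : ℚ) / (q : ℚ) = cf as) :
    Odd p ∧ Even q ∧ 1 < p := by
  obtain ⟨n, d, hd, hdn, hcf, hev, _⟩ := cf_aux as hne ha
  obtain ⟨hno, hde⟩ := hev hlen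
  have hq0 : q ≠ 0 := by rintro rfl; simp at hq
  have hqQ : (q : ℚ) ≠ 0 := by exact_mod_cast hq0
  have hd0 : d ≠ 0 := by rintro rfl; simp at hd
  have hdQ : (d : ℚ) ≠ 0 := by exact_mod_cast hd0
  rw [hcf, div_eq_div_iff hqQ hdQ] at hfrac
  have hZ : p * d = n * q := by exact_mod_cast hfrac
  have hqe : Even q := by
    have : Even (n * q) := hZ ▸ hde.mul_left p
    rcases (Int.even_mul).mp this with h | h
    · exact absurd h (Int.not_even_iff_odd.mpr hno)
    · exact h
  have hpo : Odd p := by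
    rw [← Int.not_even_iff_odd]
    intro hpe
    have h2 : (2 : ℤ) ∣ (Int.gcd p q : ℤ) := Int.dvd_coe_gcd hpe.two_dvd hqe.two_dvd
    rw [hcop] at h2
    norm_num at h2
  have h1q : 1 ≤ |q| := hq
  exact ⟨hpo, hqe, by omega⟩
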